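/- For any group G and any infinite cardinal κ with κ < |G|, the ballean (G, 𝓔_{[G]^{<κ}}) is not normal. -/

import Mathlib

universe u

open Set Pointwise

/-- For the ballean `(G, 𝓔_{[G]^{<κ}})`, sets `A, B ⊆ G` are asymptotically disjoint:
for every `I` of cardinality `< κ` the set `(A ∪ IA) ∩ (B ∪ IB)` has cardinality `< κ`. -/
def GrpAsympDisjoint {G : Type u} [Group G] (κ : Cardinal.{u}) (A B : Set G) : Prop :=
  ∀ I : Set G, Cardinal.mk ↥I < κ →
    Cardinal.mk ↥((A ∪ I * A) ∩ (B ∪ I * B)) < κ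

/-- `U` is an asymptotic neighborhood of `A` in `(G, 𝓔_{[G]^{<κ}})`: for every `I` of
cardinality `< κ` the set `(A ∪ IA) \ U` has cardinality `< κ`. -/
def GrpAsympNbhd {G : Type u} [Group G] (κ : Cardinal.{u}) (A U : Set G) : Prop :=
  ∀ I : Set G, Cardinal.mk ↥I < κ → Cardinal.mk ↥((A ∪ I * A) \ U) < κ

/-- Normality of the ballean `(G, 𝓔_{[G]^{<κ}})`. -/
def GrpNormal (G : Type u) [Group G] (κ : Cardinal.{u}) : Prop :=
  ∀ A B : Set G, GrpAsympDisjoint κ A B →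
    ∃ U V : Set G, GrpAsympNbhd κ A U ∧ GrpAsympNbhd κ B V ∧ Disjoint U V


namespace S9

open Cardinal

/-- Cardinality bound for subgroup closure. -/
lemma mk_closure_le {G : Type u} [Group G] (S : Set G) :
    #(Subgroup.closure S : Set G) ≤ max #S ℵ₀ := by
  rcases S.eq_empty_or_nonempty with rfl | hS
  · rw [Subgroup.closure_empty, Subgroup.coe_bot, mk_singleton]
    exact le_max_of_le_right one_le_aleph0
  · have : Nonempty ↥S := hS.to_subtype
    have hrange : (Subgroup.closure S : Set G)
        = Set.range (FreeGroup.lift (Subtype.val : S → G)) := by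
      rw [← MonoidHom.coe_range, FreeGroup.range_lift_eq_closure, Subtype.range_val]
    rw [hrange]
    exact mk_range_le.trans (le_of_eq (by rw [Cardinal.mk_freeGroup]))

variable (κ : Cardinal.{u})

/-- Row index type, of cardinality `κ⁺`. -/
abbrev Rt : Type u := (Order.succ κ).ord.ToType
/-- Column index type, of cardinality `κ`. -/
abbrev Ct : Type u := κ.ord.ToType
/-- The index type for the transfinite recursion. -/
abbrev Tt : Type u := Lex (Rt κ × WithBot (Ct κ))

lemma mk_Rt : #(Rt κ) = Order.succ κ := mk_ord_toType _
lemma mk_Ct : #(Ct κ) = κ := mk_ord_toType _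

variable {κ} (hκ : ℵ₀ ≤ κ)
include hκ

omit hκ in
lemma mk_Iio_Rt_le (γ : Rt κ) : #(Iio γ) ≤ κ :=
  Order.lt_succ_iff.mp (Cardinal.mk_Iio_ord_toType γ)

lemma mk_Iic_Rt_le (γ : Rt κ) : #(Iic γ) ≤ κ := by
  have : (Iic γ : Set (Rt κ)) ⊆ insert γ (Iio γ) := by
    intro x hx
    rcases lt_or_eq_of_le (mem_Iic.mp hx) with h | h
    · exact Or.inr h
    · exact Or.inl h
  refine (mk_le_mk_of_subset this).trans ?_
  refine mk_insert_le.trans ?_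
  exact (add_le_add (mk_Iio_Rt_le γ) le_rfl).trans
    (le_of_eq (add_one_eq hκ))

lemma mk_WithBot_Ct_le : #(WithBot (Ct κ)) ≤ κ := by
  have : #(WithBot (Ct κ)) = #(Ct κ) + 1 := mk_option
  rw [this, mk_Ct]
  exact le_of_eq (add_one_eq hκ)

lemma mk_Iio_Tt_le (t : Tt κ) : #(Iio t) ≤ κ := by
  classical
  set γ : Rt κ := (ofLex t).1 with hγ
  have hinj : ∃ f : ↥(Iio t) → ↥(Iic γ) × WithBot (Ct κ), Function.Injective f := by
    refine ⟨fun s => (⟨(ofLex s.1).1, ?_⟩, (ofLex s.1).2), ?_⟩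
    · have hs : s.1 < t := s.2
      have := (Prod.Lex.lt_iff (x := toLex (ofLex s.1)) (y := toLex (ofLex t))).mp (by
        simpa [toLex_ofLex] using hs)
      rcases this with h | h
      · exact le_of_lt h
      · exact le_of_eq h.1
    · intro s s' h
      apply Subtype.ext
      have h1 : (ofLex s.1).1 = (ofLex s'.1).1 :=
        congrArg (fun x : ↥(Iic γ) × WithBot (Ct κ) => (x.1 : Rt κ)) h
      have h2 : (ofLex s.1).2 = (ofLex s'.1).2 :=
        congrArg (fun x : ↥(Iic γ) × WithBot (Ct κ) => x.2) h
      have : (ofLex s.1) = (ofLex s'.1) := Prod.ext h1 h2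
      calc s.1 = toLex (ofLex s.1) := (toLex_ofLex _).symm
        _ = toLex (ofLex s'.1) := by rw [this]
        _ = s'.1 := toLex_ofLex _
  obtain ⟨f, hf⟩ := hinj
  refine (mk_le_of_injective hf).trans ?_
  have := mk_prod (↥(Iic γ)) (WithBot (Ct κ))
  rw [this, lift_id, lift_id]
  calc #(Iic γ) * #(WithBot (Ct κ)) ≤ κ * κ :=
        mul_le_mul' (mk_Iic_Rt_le hκ γ) (mk_WithBot_Ct_le hκ)
    _ = κ := mul_eq_self hκ



end S9

namespace S9
open Cardinal
open scoped Classical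

variable (G : Type u) [Group G] (κ : Cardinal.{u})

/-- An (eventually injective) map from columns into `G`. -/
noncomputable def jf : Ct κ → G :=
  if h : ∃ f : Ct κ → G, Function.Injective f then h.choose else fun _ => 1

/-- The recursively chosen generic family. -/
noncomputable def gfun : Tt κ → G :=
  WellFounded.fix (wellFounded_lt)
    (fun t rec =>
      if h : ∃ x : G, x ∉ Subgroup.closure
          (Set.range (jf G κ) ∪ {y : G | ∃ s, ∃ hs : s < t, rec s hs = y}) then
        h.choose
      else 1)

/-- The subgroup generated by all data chosen before time `t`. -/
def HH (t : Tt κ) : Subgroup G :=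
  Subgroup.closure (Set.range (jf G κ) ∪ {y : G | ∃ s, ∃ _hs : s < t, gfun G κ s = y})

lemma gfun_eq (t : Tt κ) :
    gfun G κ t = if h : ∃ x : G, x ∉ HH G κ t then h.choose else 1 :=
  WellFounded.fix_eq _ _ t

variable {G κ}

lemma jf_mem_HH (c : Ct κ) (t : Tt κ) : jf G κ c ∈ HH G κ t :=
  Subgroup.subset_closure (Or.inl ⟨c, rfl⟩)

lemma gfun_mem_HH {s t : Tt κ} (h : s < t) : gfun G κ s ∈ HH G κ t :=
  Subgroup.subset_closure (Or.inr ⟨s, h, rfl⟩)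

variable (hκ : ℵ₀ ≤ κ) (hlt : κ < #G)
include hκ hlt

omit hκ in
lemma jf_inj : Function.Injective (jf G κ) := by
  have h : ∃ f : Ct κ → G, Function.Injective f := by
    have : #(Ct κ) ≤ #G := by rw [mk_Ct]; exact hlt.le
    obtain ⟨f⟩ := (Cardinal.le_def _ _).mp this
    exact ⟨f, f.injective⟩
  rw [jf, dif_pos h]
  exact h.choose_spec

omit hlt in
lemma mk_HH_le (t : Tt κ) : #(HH G κ t : Set G) ≤ κ := by
  refine (mk_closure_le _).trans ?_
  have h1 : #(Set.range (jf G κ)) ≤ κ := by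
    refine mk_range_le.trans ?_; rw [mk_Ct]
  have h2 : #({y : G | ∃ s, ∃ _hs : s < t, gfun G κ s = y}) ≤ κ := by
    have heq : {y : G | ∃ s, ∃ _hs : s < t, gfun G κ s = y} = gfun G κ '' (Iio t) := by
      ext y
      simp only [mem_setOf_eq, mem_image, mem_Iio]
      constructor
      · rintro ⟨s, hs, rfl⟩; exact ⟨s, hs, rfl⟩
      · rintro ⟨s, hs, rfl⟩; exact ⟨s, hs, rfl⟩
    rw [heq]
    exact mk_image_le.trans (mk_Iio_Tt_le hκ t)
  refine max_le ?_ hκ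
  refine (mk_union_le _ _).trans ?_
  exact (add_le_add h1 h2).trans (le_of_eq (add_eq_self hκ))

lemma gfun_not_mem (t : Tt κ) : gfun G κ t ∉ HH G κ t := by
  have hex : ∃ x : G, x ∉ HH G κ t := by
    by_contra h
    push_neg at h
    have : #G ≤ #(HH G κ t : Set G) := by
      rw [← mk_univ]
      exact mk_le_mk_of_subset (fun x _ => h x)
    exact absurd (this.trans (mk_HH_le hκ t)) (not_le.mpr hlt)
  rw [gfun_eq, dif_pos hex]
  exact hex.choose_spec

omit hκ hlt


variable (G κ) in
/-- Grid index type. -/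
abbrev Qt : Type u := Rt κ × Ct κ

/-- Time of the grid point `q`. -/
def tm (q : Qt κ) : Tt κ := toLex (q.1, (q.2 : WithBot (Ct κ)))

/-- Time of the row element `γ`. -/
def itm (γ : Rt κ) : Tt κ := toLex (γ, (⊥ : WithBot (Ct κ)))

lemma tm_injective : Function.Injective (tm (κ := κ)) := by
  intro q q' h
  rw [tm, tm, toLex_inj] at h
  have h1 := congrArg Prod.fst h
  have h2 := congrArg Prod.snd h
  simp only at h1 h2
  exact Prod.ext h1 (WithBot.coe_inj.mp h2)

lemma itm_injective : Function.Injective (itm (κ := κ)) := by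
  intro γ γ' h
  rw [itm, itm, toLex_inj] at h
  exact congrArg Prod.fst h

lemma itm_ne_tm (γ : Rt κ) (q : Qt κ) : itm γ ≠ tm q := by
  intro h
  rw [itm, tm, toLex_inj] at h
  have := congrArg Prod.snd h
  simp only at this
  exact (WithBot.bot_ne_coe (a := q.2)) this

lemma itm_lt_tm (q : Qt κ) : itm q.1 < tm q := by
  rw [itm, tm]
  exact Prod.Lex.lt_iff.mpr (Or.inr ⟨rfl, WithBot.bot_lt_coe _⟩)

variable (G) in
/-- The grid points. -/
noncomputable def pp (q : Qt κ) : G := gfun G κ (tm q)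

variable (G) in
/-- The row translators. -/
noncomputable def iE (γ : Rt κ) : G := gfun G κ (itm γ)

variable (G) in
/-- The `A`-elements. -/
noncomputable def aa (q : Qt κ) : G := (iE G q.1)⁻¹ * pp G q

variable (G) in
/-- The `B`-elements. -/
noncomputable def bb (q : Qt κ) : G := (jf G κ q.2)⁻¹ * pp G q

variable (G) in
/-- The crucial products. -/
noncomputable def Zp (q r : Qt κ) : G := aa G q * (bb G r)⁻¹

lemma pp_mem_HH {q : Qt κ} {t : Tt κ} (h : tm q < t) : pp G q ∈ HH G κ t :=
  gfun_mem_HH h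

lemma iE_mem_HH {γ : Rt κ} {t : Tt κ} (h : itm γ < t) : iE G γ ∈ HH G κ t :=
  gfun_mem_HH h

lemma iE_mem_HH' {q : Qt κ} {t : Tt κ} (h : tm q < t) : iE G q.1 ∈ HH G κ t :=
  gfun_mem_HH ((itm_lt_tm q).trans h)

lemma aa_mem_HH {q : Qt κ} {t : Tt κ} (h : tm q < t) : aa G q ∈ HH G κ t :=
  mul_mem (inv_mem (iE_mem_HH' h)) (pp_mem_HH h)

lemma bb_mem_HH {q : Qt κ} {t : Tt κ} (h : tm q < t) : bb G q ∈ HH G κ t :=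
  mul_mem (inv_mem (jf_mem_HH _ _)) (pp_mem_HH h)

lemma Zp_mem_HH {q r : Qt κ} {t : Tt κ} (hq : tm q < t) (hr : tm r < t) :
    Zp G q r ∈ HH G κ t :=
  mul_mem (aa_mem_HH hq) (inv_mem (bb_mem_HH hr))

include hκ hlt in
lemma gfun_inj : Function.Injective (gfun G κ) := by
  intro s t h
  by_contra hne
  rcases lt_or_gt_of_ne hne with hlt' | hlt'
  · exact gfun_not_mem hκ hlt t (h ▸ gfun_mem_HH hlt')
  · exact gfun_not_mem hκ hlt s (h.symm ▸ gfun_mem_HH hlt')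

include hκ hlt in
lemma pp_inj : Function.Injective (pp G (κ := κ)) := fun q q' h =>
  tm_injective (gfun_inj hκ hlt h)

include hκ hlt in
lemma bb_inj : Function.Injective (bb G (κ := κ)) := by
  intro q q' h
  by_contra hne
  have hne' : tm q ≠ tm q' := fun he => hne (tm_injective he)
  rw [bb, bb] at h
  rcases lt_or_gt_of_ne hne' with hlt' | hlt'
  · -- q' is newer
    have hx : pp G q' = jf G κ q'.2 * (jf G κ q.2)⁻¹ * pp G q := by
      rw [eq_comm, inv_mul_eq_iff_eq_mul] at h
      rw [h]; group
    refine gfun_not_mem hκ hlt (tm q') ?_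
    rw [show gfun G κ (tm q') = pp G q' from rfl, hx]
    exact mul_mem (mul_mem (jf_mem_HH _ _) (inv_mem (jf_mem_HH _ _))) (pp_mem_HH hlt')
  · have hx : pp G q = jf G κ q.2 * (jf G κ q'.2)⁻¹ * pp G q' := by
      rw [inv_mul_eq_iff_eq_mul] at h
      rw [h]; group
    refine gfun_not_mem hκ hlt (tm q) ?_
    rw [show gfun G κ (tm q) = pp G q from rfl, hx]
    exact mul_mem (mul_mem (jf_mem_HH _ _) (inv_mem (jf_mem_HH _ _))) (pp_mem_HH hlt')

include hκ hlt in
lemma aa_inj : Function.Injective (aa G (κ := κ)) := by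
  intro q q' h
  by_contra hne
  have hne' : tm q ≠ tm q' := fun he => hne (tm_injective he)
  rw [aa, aa] at h
  rcases lt_or_gt_of_ne hne' with hlt' | hlt'
  · have hx : pp G q' = iE G q'.1 * (iE G q.1)⁻¹ * pp G q := by
      rw [eq_comm, inv_mul_eq_iff_eq_mul] at h
      rw [h]; group
    refine gfun_not_mem hκ hlt (tm q') ?_
    rw [show gfun G κ (tm q') = pp G q' from rfl, hx]
    exact mul_mem (mul_mem (iE_mem_HH (itm_lt_tm q')) (inv_mem (iE_mem_HH ((itm_lt_tm q).trans hlt')))) (pp_mem_HH hlt')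
  · have hx : pp G q = iE G q.1 * (iE G q'.1)⁻¹ * pp G q' := by
      rw [inv_mul_eq_iff_eq_mul] at h
      rw [h]; group
    refine gfun_not_mem hκ hlt (tm q) ?_
    rw [show gfun G κ (tm q) = pp G q from rfl, hx]
    exact mul_mem (mul_mem (iE_mem_HH (itm_lt_tm q)) (inv_mem (iE_mem_HH ((itm_lt_tm q').trans hlt')))) (pp_mem_HH hlt')


lemma Zp_diag (q : Qt κ) : Zp G q q = (iE G q.1)⁻¹ * jf G κ q.2 := by
  rw [Zp, aa, bb]; group

/-- The diagonal value is in `HH t` as soon as `t` is past the row start. -/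
lemma Zp_diag_mem_HH {q : Qt κ} {t : Tt κ} (h : itm q.1 < t) : Zp G q q ∈ HH G κ t := by
  rw [Zp_diag]
  exact mul_mem (inv_mem (iE_mem_HH h)) (jf_mem_HH _ _)

include hκ hlt in
/-- Impossible collision: `q1` strictly newest. -/
lemma hq_slot {q1 r1 q2 r2 : Qt κ} (h : Zp G q1 r1 = Zp G q2 r2)
    (h1 : tm r1 < tm q1) (h2 : tm q2 < tm q1) (h3 : tm r2 < tm q1) : False := by
  have hx : pp G q1 = iE G q1.1 * Zp G q2 r2 * bb G r1 := by
    rw [← h, Zp, aa]; group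
  refine gfun_not_mem hκ hlt (tm q1) ?_
  rw [show gfun G κ (tm q1) = pp G q1 from rfl, hx]
  exact mul_mem (mul_mem (iE_mem_HH (itm_lt_tm q1)) (Zp_mem_HH h2 h3)) (bb_mem_HH h1)

include hκ hlt in
/-- Impossible collision: `r1` strictly newest. -/
lemma hr_slot {q1 r1 q2 r2 : Qt κ} (h : Zp G q1 r1 = Zp G q2 r2)
    (h1 : tm q1 < tm r1) (h2 : tm q2 < tm r1) (h3 : tm r2 < tm r1) : False := by
  have hx : pp G r1 = jf G κ r1.2 * (Zp G q2 r2)⁻¹ * aa G q1 := by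
    rw [← h, Zp, bb]; group
  refine gfun_not_mem hκ hlt (tm r1) ?_
  rw [show gfun G κ (tm r1) = pp G r1 from rfl, hx]
  exact mul_mem (mul_mem (jf_mem_HH _ _) (inv_mem (Zp_mem_HH h2 h3))) (aa_mem_HH h1)

include hκ hlt in
lemma r_eq_of_q_eq {q1 r1 r2 : Qt κ} (h : Zp G q1 r1 = Zp G q1 r2) : r1 = r2 := by
  apply bb_inj hκ hlt
  rw [Zp, Zp] at h
  exact inv_injective (mul_left_cancel h)

include hκ hlt in
lemma q_eq_of_r_eq {q1 q2 r1 : Qt κ} (h : Zp G q1 r1 = Zp G q2 r1) : q1 = q2 := by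
  apply aa_inj hκ hlt
  rw [Zp, Zp] at h
  exact mul_right_cancel h

include hκ hlt in
/-- A diagonal pair can only collide with itself. -/
lemma L_diag {q q' r' : Qt κ} (h : Zp G q q = Zp G q' r') : q' = r' ∧ q' = q := by
  by_cases hqr : q' = r'
  · subst hqr
    refine ⟨rfl, ?_⟩
    rw [Zp_diag, Zp_diag] at h
    by_cases h1 : q.1 = q'.1
    · have hiE : iE G q.1 = iE G q'.1 := by rw [h1]
      rw [hiE] at h
      have h2 : jf G κ q.2 = jf G κ q'.2 := mul_left_cancel h
      exact Prod.ext h1.symm (jf_inj hlt h2).symm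
    · exfalso
      have hne : itm q.1 ≠ itm q'.1 := fun he => h1 (itm_injective he)
      rcases lt_or_gt_of_ne hne with hlt' | hlt'
      · -- q' newest
        have hx : iE G q'.1 = jf G κ q'.2 * (jf G κ q.2)⁻¹ * iE G q.1 := by
          rw [eq_comm, inv_mul_eq_iff_eq_mul] at h
          rw [h]; group
        refine gfun_not_mem hκ hlt (itm q'.1) ?_
        rw [show gfun G κ (itm q'.1) = iE G q'.1 from rfl, hx]
        exact mul_mem (mul_mem (jf_mem_HH _ _) (inv_mem (jf_mem_HH _ _)))
          (iE_mem_HH hlt')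
      · have hx : iE G q.1 = jf G κ q.2 * (jf G κ q'.2)⁻¹ * iE G q'.1 := by
          rw [inv_mul_eq_iff_eq_mul] at h
          rw [h]; group
        refine gfun_not_mem hκ hlt (itm q.1) ?_
        rw [show gfun G κ (itm q.1) = iE G q.1 from rfl, hx]
        exact mul_mem (mul_mem (jf_mem_HH _ _) (inv_mem (jf_mem_HH _ _)))
          (iE_mem_HH hlt')
  · exfalso
    have ht23 : tm q' ≠ tm r' := fun he => hqr (tm_injective he)
    rcases lt_or_gt_of_ne ht23 with h23 | h23
    · -- tm q' < tm r'
      rcases lt_or_gt_of_ne (itm_ne_tm q.1 r') with hu | hu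
      · -- r' newest
        have hx : pp G r' = jf G κ r'.2 * (Zp G q q)⁻¹ * aa G q' := by
          rw [h, Zp, bb]; group
        refine gfun_not_mem hκ hlt (tm r') ?_
        rw [show gfun G κ (tm r') = pp G r' from rfl, hx]
        exact mul_mem (mul_mem (jf_mem_HH _ _) (inv_mem (Zp_diag_mem_HH hu)))
          (aa_mem_HH h23)
      · -- itm q.1 newest
        have hx : iE G q.1 = jf G κ q.2 * (Zp G q' r')⁻¹ := by
          rw [← h, Zp_diag]; group
        refine gfun_not_mem hκ hlt (itm q.1) ?_
        rw [show gfun G κ (itm q.1) = iE G q.1 from rfl, hx]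
        exact mul_mem (jf_mem_HH _ _) (inv_mem (Zp_mem_HH (h23.trans hu) hu))
    · -- tm r' < tm q'
      rcases lt_or_gt_of_ne (itm_ne_tm q.1 q') with hu | hu
      · -- q' newest
        have hx : pp G q' = iE G q'.1 * Zp G q q * bb G r' := by
          rw [h, Zp, aa]; group
        refine gfun_not_mem hκ hlt (tm q') ?_
        rw [show gfun G κ (tm q') = pp G q' from rfl, hx]
        exact mul_mem (mul_mem (iE_mem_HH (itm_lt_tm q')) (Zp_diag_mem_HH hu))
          (bb_mem_HH h23)
      · -- itm q.1 newest
        have hx : iE G q.1 = jf G κ q.2 * (Zp G q' r')⁻¹ := by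
          rw [← h, Zp_diag]; group
        refine gfun_not_mem hκ hlt (itm q.1) ?_
        rw [show gfun G κ (itm q.1) = iE G q.1 from rfl, hx]
        exact mul_mem (jf_mem_HH _ _) (inv_mem (Zp_mem_HH hu (h23.trans hu)))


include hκ hlt in
/-- The main collision analysis: any collision between distinct non-diagonal pairs is of the
"newest point shared crosswise" shape. -/
lemma Zcollide {q1 r1 q2 r2 : Qt κ} (hd1 : q1 ≠ r1) (hd2 : q2 ≠ r2)
    (h : Zp G q1 r1 = Zp G q2 r2) :
    (q1 = q2 ∧ r1 = r2) ∨
    (q1 = r2 ∧ tm r1 < tm q1 ∧ tm q2 < tm q1) ∨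
    (q2 = r1 ∧ tm r2 < tm q2 ∧ tm q1 < tm q2) := by
  by_cases hq : q1 = q2
  · subst hq
    exact Or.inl ⟨rfl, r_eq_of_q_eq hκ hlt h⟩
  by_cases hr : r1 = r2
  · subst hr
    exact absurd (q_eq_of_r_eq hκ hlt h) hq
  by_cases h12 : q1 = r2
  · by_cases h21 : q2 = r1
    · -- both cross identifications
      have hne : tm q1 ≠ tm q2 := fun he => hq (tm_injective he)
      rcases lt_or_gt_of_ne hne with hl | hl
      · -- tm q1 < tm q2
        refine Or.inr (Or.inr ⟨h21, ?_, hl⟩)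
        rw [← h12]; exact hl
      · refine Or.inr (Or.inl ⟨h12, ?_, hl⟩)
        rw [← h21]; exact hl
    · -- only q1 = r2
      have hne_r1q1 : tm r1 ≠ tm q1 := fun he => hd1 (tm_injective he).symm
      have hne_q2q1 : tm q2 ≠ tm q1 := fun he => hq (tm_injective he).symm
      rcases lt_or_gt_of_ne hne_r1q1 with hA | hA
      · rcases lt_or_gt_of_ne hne_q2q1 with hB | hB
        · exact Or.inr (Or.inl ⟨h12, hA, hB⟩)
        · -- tm q1 < tm q2 : q2 is newest
          exact absurd (hq_slot hκ hlt h.symm (h12 ▸ hB) hB (hA.trans hB)) not_false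
      · -- tm q1 < tm r1
        have hne_q2r1 : tm q2 ≠ tm r1 := fun he => h21 (tm_injective he)
        rcases lt_or_gt_of_ne hne_q2r1 with hC | hC
        · -- r1 newest
          exact absurd (hr_slot hκ hlt h hA hC (h12 ▸ hA)) not_false
        · -- q2 newest (tm r1 < tm q2, tm q1 < tm r1 < tm q2)
          exact absurd (hq_slot hκ hlt h.symm (h12 ▸ (hA.trans hC)) (hA.trans hC) hC)
            not_false
  · by_cases h21 : q2 = r1
    · -- only q2 = r1 : symmetric
      have hne_r2q2 : tm r2 ≠ tm q2 := fun he => hd2 (tm_injective he).symm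
      have hne_q1q2 : tm q1 ≠ tm q2 := fun he => hq (tm_injective he)
      rcases lt_or_gt_of_ne hne_r2q2 with hA | hA
      · rcases lt_or_gt_of_ne hne_q1q2 with hB | hB
        · exact Or.inr (Or.inr ⟨h21, hA, hB⟩)
        · exact absurd (hq_slot hκ hlt h (h21 ▸ hB) hB (hA.trans hB)) not_false
      · have hne_q1r2 : tm q1 ≠ tm r2 := fun he => h12 (tm_injective he)
        rcases lt_or_gt_of_ne hne_q1r2 with hC | hC
        · exact absurd (hr_slot hκ hlt h.symm hA hC (h21 ▸ hA)) not_false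
        · exact absurd (hq_slot hκ hlt h (h21 ▸ (hA.trans hC)) (hA.trans hC) hC)
            not_false
    · -- all four points distinct
      exfalso
      have d_q1r1 : tm q1 ≠ tm r1 := fun he => hd1 (tm_injective he)
      have d_q2r2 : tm q2 ≠ tm r2 := fun he => hd2 (tm_injective he)
      have d_q1q2 : tm q1 ≠ tm q2 := fun he => hq (tm_injective he)
      have d_r1r2 : tm r1 ≠ tm r2 := fun he => hr (tm_injective he)
      have d_q1r2 : tm q1 ≠ tm r2 := fun he => h12 (tm_injective he)
      have d_q2r1 : tm q2 ≠ tm r1 := fun he => h21 (tm_injective he)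
      set m := max (max (tm q1) (tm r1)) (max (tm q2) (tm r2)) with hm
      have le1 : tm q1 ≤ m := le_max_of_le_left (le_max_left _ _)
      have le2 : tm r1 ≤ m := le_max_of_le_left (le_max_right _ _)
      have le3 : tm q2 ≤ m := le_max_of_le_right (le_max_left _ _)
      have le4 : tm r2 ≤ m := le_max_of_le_right (le_max_right _ _)
      have hcases : m = tm q1 ∨ m = tm r1 ∨ m = tm q2 ∨ m = tm r2 := by
        rcases max_choice (max (tm q1) (tm r1)) (max (tm q2) (tm r2)) with h' | h' <;>
          rw [hm, h']
        · rcases max_choice (tm q1) (tm r1) with h'' | h'' <;> rw [h'']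
          · exact Or.inl rfl
          · exact Or.inr (Or.inl rfl)
        · rcases max_choice (tm q2) (tm r2) with h'' | h'' <;> rw [h'']
          · exact Or.inr (Or.inr (Or.inl rfl))
          · exact Or.inr (Or.inr (Or.inr rfl))
      rcases hcases with hM | hM | hM | hM
      · exact hq_slot hκ hlt h (lt_of_le_of_ne (le2.trans_eq hM) d_q1r1.symm)
          (lt_of_le_of_ne (le3.trans_eq hM) d_q1q2.symm)
          (lt_of_le_of_ne (le4.trans_eq hM) d_q1r2.symm)
      · exact hr_slot hκ hlt h (lt_of_le_of_ne (le1.trans_eq hM) d_q1r1)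
          (lt_of_le_of_ne (le3.trans_eq hM) d_q2r1)
          (lt_of_le_of_ne (le4.trans_eq hM) d_r1r2.symm)
      · exact hq_slot hκ hlt h.symm (lt_of_le_of_ne (le4.trans_eq hM) d_q2r2.symm)
          (lt_of_le_of_ne (le1.trans_eq hM) d_q1q2)
          (lt_of_le_of_ne (le2.trans_eq hM) d_q2r1.symm)
      · exact hr_slot hκ hlt h.symm (lt_of_le_of_ne (le3.trans_eq hM) d_q2r2)
          (lt_of_le_of_ne (le1.trans_eq hM) d_q1r2)
          (lt_of_le_of_ne (le2.trans_eq hM) d_r1r2)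


include hκ hlt in
/-- No value of `Zp` is attained by three pairwise distinct pairs. -/
lemma no_three {q1 r1 q2 r2 q3 r3 : Qt κ}
    (h12 : Zp G q1 r1 = Zp G q2 r2) (h13 : Zp G q1 r1 = Zp G q3 r3)
    (hne12 : (q1, r1) ≠ (q2, r2)) (hne13 : (q1, r1) ≠ (q3, r3))
    (hne23 : (q2, r2) ≠ (q3, r3)) : False := by
  have h23 : Zp G q2 r2 = Zp G q3 r3 := h12.symm.trans h13
  by_cases hd1 : q1 = r1
  · subst hd1
    obtain ⟨e1, e2⟩ := L_diag hκ hlt h12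
    exact hne12 (by rw [← e1, e2])
  by_cases hd2 : q2 = r2
  · subst hd2
    obtain ⟨e1, e2⟩ := L_diag hκ hlt h12.symm
    exact hne12 (by rw [← e1, e2])
  by_cases hd3 : q3 = r3
  · subst hd3
    obtain ⟨e1, e2⟩ := L_diag hκ hlt h13.symm
    exact hne13 (by rw [← e1, e2])
  rcases Zcollide hκ hlt hd1 hd2 h12 with ⟨e1, e2⟩ | ⟨e12, d1, d2⟩ | ⟨e21, d1', d2'⟩
  · exact hne12 (by rw [e1, e2])
  · -- q1 = r2, tm r1 < tm q1, tm q2 < tm q1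
    rcases Zcollide hκ hlt hd1 hd3 h13 with ⟨e1, e2⟩ | ⟨e13, _, _⟩ | ⟨e31, _, d⟩
    · exact hne13 (by rw [e1, e2])
    · -- q1 = r3 : then r2 = r3
      have hrr : r2 = r3 := by rw [← e12, e13]
      subst hrr
      exact hne23 (by rw [q_eq_of_r_eq hκ hlt h23])
    · -- q3 = r1 : time contradiction
      rw [← e31] at d1
      exact absurd (d1.trans d) (lt_irrefl _)
  · -- q2 = r1, tm r2 < tm q2, tm q1 < tm q2
    rcases Zcollide hκ hlt hd2 hd3 h23 with ⟨e1, e2⟩ | ⟨e23, _, d⟩ | ⟨e32, _, d⟩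
    · exact hne23 (by rw [e1, e2])
    · -- q2 = r3
      rcases Zcollide hκ hlt hd1 hd3 h13 with ⟨e1, e2⟩ | ⟨e13, _, _⟩ | ⟨e31, _, _⟩
      · exact hne13 (by rw [e1, e2])
      · -- q1 = r3 and q2 = r3 : q1 = q2
        have : q1 = q2 := by rw [e13, ← e23]
        subst this
        exact hne12 (by rw [r_eq_of_q_eq hκ hlt h12])
      · -- q3 = r1 and q2 = r1 : q2 = q3
        have : q2 = q3 := by rw [e21, ← e31]
        subst this
        exact hne23 (by rw [r_eq_of_q_eq hκ hlt h23])
    · -- q3 = r2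
      rcases Zcollide hκ hlt hd1 hd3 h13 with ⟨e1, e2⟩ | ⟨e13, _, db⟩ | ⟨e31, _, _⟩
      · exact hne13 (by rw [e1, e2])
      · -- cycle: tm q1 < tm q2 < tm q3 < tm q1
        exact absurd ((d2'.trans d).trans db) (lt_irrefl _)
      · -- q3 = r1 and q2 = r1 : q2 = q3
        have : q2 = q3 := by rw [e21, ← e31]
        subst this
        exact hne23 (by rw [r_eq_of_q_eq hκ hlt h23])

include hκ hlt in
/-- Every fiber of `Zp` (as a function of the pair) contains at most two pairs. -/
lemma fiber_le_two (z : G) :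
    ∃ P1 P2 : Qt κ × Qt κ, ∀ P : Qt κ × Qt κ, Zp G P.1 P.2 = z → P = P1 ∨ P = P2 := by
  by_cases h2 : ∃ P1 P2 : Qt κ × Qt κ,
      Zp G P1.1 P1.2 = z ∧ Zp G P2.1 P2.2 = z ∧ P1 ≠ P2
  · obtain ⟨P1, P2, hP1, hP2, hne⟩ := h2
    refine ⟨P1, P2, fun P hP => ?_⟩
    by_contra hcon
    push_neg at hcon
    obtain ⟨hc1, hc2⟩ := hcon
    exact no_three hκ hlt (q1 := P.1) (r1 := P.2)
      (hP.trans hP1.symm) (hP.trans hP2.symm)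
      (by simpa using hc1) (by simpa using hc2) (by simpa using hne)
  · push_neg at h2
    by_cases h1 : ∃ P1 : Qt κ × Qt κ, Zp G P1.1 P1.2 = z
    · obtain ⟨P1, hP1⟩ := h1
      refine ⟨P1, P1, fun P hP => Or.inl ?_⟩
      by_contra hne
      exact hne (h2 P P1 hP hP1)
    · push_neg at h1
      have hne : Nonempty (Qt κ) := by
        constructor
        constructor
        · exact Classical.choice (Ordinal.toType_nonempty_iff_ne_zero.mpr
            (fun h0 => by
              have := Cardinal.ord_eq_zero.mp h0
              have h1' : (0:Cardinal) < Order.succ κ := lt_of_lt_of_le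
                (lt_of_lt_of_le aleph0_pos hκ) (Order.le_succ κ)
              exact absurd this (by simpa using h1'.ne')))
        · exact Classical.choice (Ordinal.toType_nonempty_iff_ne_zero.mpr
            (fun h0 => by
              have := Cardinal.ord_eq_zero.mp h0
              exact absurd this (by
                have : (0:Cardinal) < κ := lt_of_lt_of_le aleph0_pos hκ
                simpa using this.ne')))
      obtain ⟨q0⟩ := hne
      exact ⟨(q0, q0), (q0, q0), fun P hP => absurd (h1 P hP) not_false⟩


include hκ hlt in
/-- The two sets are asymptotically disjoint. -/
lemma asymp_disjoint : GrpAsympDisjoint κ (Set.range (aa G (κ := κ))) (Set.range (bb G (κ := κ))) := by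
  intro I hI
  classical
  set A : Set G := Set.range (aa G (κ := κ)) with hA
  set B : Set G := Set.range (bb G (κ := κ)) with hB
  set K : Set G := insert 1 I with hK
  have hKcard : #K < κ := by
    refine lt_of_le_of_lt mk_insert_le ?_
    exact add_lt_of_lt hκ hI (lt_of_lt_of_le one_lt_aleph0 hκ)
  have hsubA : A ∪ I * A ⊆ K * A := by
    rintro x (hx | hx)
    · exact ⟨1, mem_insert _ _, x, hx, one_mul x⟩
    · obtain ⟨i, hi, a, ha, rfl⟩ := hx
      exact ⟨i, mem_insert_of_mem _ hi, a, ha, rfl⟩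
  have hsubB : B ∪ I * B ⊆ K * B := by
    rintro x (hx | hx)
    · exact ⟨1, mem_insert _ _, x, hx, one_mul x⟩
    · obtain ⟨i, hi, b, hb, rfl⟩ := hx
      exact ⟨i, mem_insert_of_mem _ hi, b, hb, rfl⟩
  refine lt_of_le_of_lt (mk_le_mk_of_subset (inter_subset_inter hsubA hsubB)) ?_
  -- choose decompositions
  set S : Set G := (K * A) ∩ (K * B) with hS
  have hdecompA : ∀ s : ↥S, ∃ k, k ∈ K ∧ ∃ qa : Qt κ, k * aa G qa = (s : G) := by
    rintro ⟨s, hs1, -⟩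
    obtain ⟨k, hk, α, hα, hmul⟩ := hs1
    obtain ⟨qa, rfl⟩ := hα
    exact ⟨k, hk, qa, hmul⟩
  have hdecompB : ∀ s : ↥S, ∃ k, k ∈ K ∧ ∃ rb : Qt κ, k * bb G rb = (s : G) := by
    rintro ⟨s, -, hs2⟩
    obtain ⟨k, hk, β, hβ, hmul⟩ := hs2
    obtain ⟨rb, rfl⟩ := hβ
    exact ⟨k, hk, rb, hmul⟩
  choose k1 hk1 qa hqa using hdecompA
  choose k2 hk2 rb hrb using hdecompB
  have hZval : ∀ s : ↥S, Zp G (qa s) (rb s) = (k1 s)⁻¹ * (k2 s) := by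
    intro s
    have e1 : aa G (qa s) = (k1 s)⁻¹ * (s : G) := by
      rw [← hqa s]; group
    have e2 : bb G (rb s) = (k2 s)⁻¹ * (s : G) := by
      rw [← hrb s]; group
    rw [Zp, e1, e2]; group
  choose P1 P2 hP using fun z : G => fiber_le_two hκ hlt z
  -- injection into K × K × Bool
  have hinj : ∃ f : ↥S → (↥K × ↥K) × Bool, Function.Injective f := by
    refine ⟨fun s => ((⟨k1 s, hk1 s⟩, ⟨k2 s, hk2 s⟩),
      decide ((qa s, rb s) = P1 ((k1 s)⁻¹ * (k2 s)))), ?_⟩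
    intro s s' h
    have hk1e : k1 s = k1 s' := congrArg (fun x => ((x.1.1 : G))) h
    have hk2e : k2 s = k2 s' := congrArg (fun x => ((x.1.2 : G))) h
    have hbe : decide ((qa s, rb s) = P1 ((k1 s)⁻¹ * (k2 s)))
        = decide ((qa s', rb s') = P1 ((k1 s')⁻¹ * (k2 s'))) :=
      congrArg (fun x => x.2) h
    set z := (k1 s)⁻¹ * (k2 s) with hz
    have hz' : (k1 s')⁻¹ * (k2 s') = z := by rw [← hk1e, ← hk2e]
    have hPs : (qa s, rb s) = P1 z ∨ (qa s, rb s) = P2 z := hP z _ (hZval s)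
    have hPs' : (qa s', rb s') = P1 z ∨ (qa s', rb s') = P2 z := by
      refine hP z _ ?_
      rw [hZval s', hz']
    rw [hz'] at hbe
    have hqq : (qa s, rb s) = (qa s', rb s') := by
      by_cases hb : (qa s, rb s) = P1 z
      · have : decide ((qa s, rb s) = P1 z) = true := by simp [hb]
        rw [this] at hbe
        have hb' : (qa s', rb s') = P1 z := of_decide_eq_true hbe.symm
        rw [hb, hb']
      · have : decide ((qa s, rb s) = P1 z) = false := by simp [hb]
        rw [this] at hbe
        have hb' : ¬ (qa s', rb s') = P1 z := of_decide_eq_false hbe.symm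
        rw [hPs.resolve_left hb, hPs'.resolve_left hb']
    have hqe : qa s = qa s' := congrArg Prod.fst hqq
    apply Subtype.ext
    calc (s : G) = k1 s * aa G (qa s) := (hqa s).symm
      _ = k1 s' * aa G (qa s') := by rw [hk1e, hqe]
      _ = (s' : G) := hqa s'
  obtain ⟨f, hf⟩ := hinj
  refine lt_of_le_of_lt (mk_le_of_injective hf) ?_
  have hmk : #((↥K × ↥K) × Bool) ≤ #K * #K * 2 := by
    simp [mk_prod, mk_bool]
  refine lt_of_le_of_lt hmk ?_
  exact mul_lt_of_lt hκ (mul_lt_of_lt hκ hKcard hKcard)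
    (lt_of_lt_of_le (by exact_mod_cast nat_lt_aleph0 2) hκ)

include hκ hlt in
/-- The ballean is not normal: the sets `range aa` and `range bb` are asymptotically
disjoint but cannot be separated. -/
lemma not_normal : ¬ GrpNormal G κ := by
  intro hN
  obtain ⟨U, V, hU, hV, hUV⟩ := hN _ _ (asymp_disjoint hκ hlt)
  -- every row meets `U`
  have hrow : ∀ γ : Rt κ, ∃ δ : Ct κ, pp G (γ, δ) ∈ U := by
    intro γ
    by_contra hcon
    push_neg at hcon
    have h1 : #({iE G γ} : Set G) < κ := by
      rw [mk_singleton]; exact lt_of_lt_of_le one_lt_aleph0 hκ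
    have h2 := hU {iE G γ} h1
    have hsub : (Set.range fun δ : Ct κ => pp G (γ, δ)) ⊆
        ((Set.range (aa G (κ := κ)) ∪ {iE G γ} * Set.range (aa G (κ := κ))) \ U) := by
      rintro x ⟨δ, rfl⟩
      refine ⟨Or.inr ⟨iE G γ, rfl, aa G (γ, δ), ⟨(γ, δ), rfl⟩, ?_⟩, hcon δ⟩
      rw [aa]; group
    have hinj : Function.Injective (fun δ : Ct κ => pp G (γ, δ)) := by
      intro δ δ' h
      exact congrArg Prod.snd (pp_inj hκ hlt h)
    have hle : κ ≤ #(↥((Set.range (aa G (κ := κ)) ∪ {iE G γ} * Set.range (aa G (κ := κ))) \ U)) := by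
      calc κ = #(Ct κ) := (mk_Ct κ).symm
        _ = #(Set.range fun δ : Ct κ => pp G (γ, δ)) := (mk_range_eq _ hinj).symm
        _ ≤ _ := mk_le_mk_of_subset hsub
    exact absurd (lt_of_le_of_lt hle h2) (lt_irrefl κ)
  choose sδ hsδ using hrow
  -- the union of all column exceptional sets
  set M : Set G := ⋃ δ : Ct κ, ((Set.range fun γ : Rt κ => pp G (γ, δ)) \ V) with hM
  have hMle : #M ≤ κ := by
    refine (mk_iUnion_le _).trans ?_
    have hsup : ⨆ δ : Ct κ, #(↥((Set.range fun γ : Rt κ => pp G (γ, δ)) \ V)) ≤ κ := by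
      refine ciSup_le' fun δ => ?_
      have h1 : #({jf G κ δ} : Set G) < κ := by
        rw [mk_singleton]; exact lt_of_lt_of_le one_lt_aleph0 hκ
      have h2 := hV {jf G κ δ} h1
      refine le_of_lt (lt_of_le_of_lt (mk_le_mk_of_subset ?_) h2)
      rintro x ⟨⟨γ, rfl⟩, hxV⟩
      refine ⟨Or.inr ⟨jf G κ δ, rfl, bb G (γ, δ), ⟨(γ, δ), rfl⟩, ?_⟩, hxV⟩
      rw [bb]; group
    calc #(Ct κ) * ⨆ δ : Ct κ, #(↥((Set.range fun γ : Rt κ => pp G (γ, δ)) \ V))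
        ≤ κ * κ := mul_le_mul' (le_of_eq (mk_Ct κ)) hsup
      _ = κ := mul_eq_self hκ
  have hinj2 : ∃ f : Rt κ → ↥M, Function.Injective f := by
    refine ⟨fun γ => ⟨pp G (γ, sδ γ), ?_⟩, ?_⟩
    · refine mem_iUnion.mpr ⟨sδ γ, ⟨⟨γ, rfl⟩, ?_⟩⟩
      exact fun hxV => (Set.disjoint_left.mp hUV (hsδ γ)) hxV
    · intro γ γ' h
      exact congrArg Prod.fst (pp_inj hκ hlt (Subtype.ext_iff.mp h))
  obtain ⟨f, hf⟩ := hinj2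
  have hfin : Order.succ κ ≤ κ := by
    calc Order.succ κ = #(Rt κ) := (mk_Rt κ).symm
      _ ≤ #M := mk_le_of_injective hf
      _ ≤ κ := hMle
  exact absurd (lt_of_lt_of_le (Order.lt_succ_iff.mpr le_rfl) hfin) (lt_irrefl κ)

end S9

/-- STATEMENT 9: for any group `G` and any infinite cardinal `κ < |G|`, the ballean
`(G, 𝓔_{[G]^{<κ}})` is not normal. -/
theorem statement9 {G : Type u} [Group G] (κ : Cardinal.{u})
    (hκ : Cardinal.aleph0 ≤ κ) (hlt : κ < Cardinal.mk G) :
    ¬ GrpNormal G κ := by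
  exact S9.not_normal hκ hlt
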